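/- For each t ∈ ℂ, the bracket defined on the span of {e_i : i ≥ 1} by [e₁, e_j]²_t = (j−1)e_{j+1} + t j e_j for j ≠ 1, and [e_i, e_j]²_t = (j−i)e_{i+j} when i ≠ 1 and j ≠ 1 (extended antisymmetrically), satisfies the Jacobi identity. -/

import Mathlib

/-- Structure constants of the second deformation of `L₁`:
`[e₁, e_j]²_t = (j−1) e_{j+1} + t j e_j` for `j ≠ 1`, `[e_i, e_j]²_t = (j−i) e_{i+j}` for
`i ≠ 1, j ≠ 1`, extended antisymmetrically (and `[e₁,e₁] = 0`). -/
noncomputable def c12 (t : ℂ) (i j : ℕ+) : ℕ+ →₀ ℂ :=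
  if i = 1 ∧ j = 1 then 0
  else if i = 1 then
    (((j : ℕ) : ℂ) - 1) • Finsupp.single (j + 1) (1 : ℂ)
      + (t * ((j : ℕ) : ℂ)) • Finsupp.single j (1 : ℂ)
  else if j = 1 then
    -((((i : ℕ) : ℂ) - 1) • Finsupp.single (i + 1) (1 : ℂ)
      + (t * ((i : ℕ) : ℂ)) • Finsupp.single i (1 : ℂ))
  else (((j : ℕ) : ℂ) - ((i : ℕ) : ℂ)) • Finsupp.single (i + j) (1 : ℂ)

/-- The bilinear extension of `c12`. -/
noncomputable def L1br2 (t : ℂ) : (ℕ+ →₀ ℂ) →ₗ[ℂ] (ℕ+ →₀ ℂ) →ₗ[ℂ] (ℕ+ →₀ ℂ) :=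
  Finsupp.lsum ℂ fun i => LinearMap.toSpanSingleton ℂ _
    (Finsupp.lsum ℂ fun j => LinearMap.toSpanSingleton ℂ _ (c12 t i j))



lemma br_ss (t : ℂ) (i j : ℕ+) :
    L1br2 t (Finsupp.single i 1) (Finsupp.single j 1) = c12 t i j := by
  simp [L1br2, Finsupp.lsum_single, LinearMap.toSpanSingleton_apply]

lemma pnat_add_ne_one (i j : ℕ+) : i + j ≠ 1 := by
  intro h
  have := congrArg PNat.val h
  have h1 := i.pos
  have h2 := j.pos
  simp [PNat.add_coe] at this
  omega

lemma c12_eq (t : ℂ) (i j : ℕ+) : c12 t i j =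
    (((j : ℕ) : ℂ) - ((i : ℕ) : ℂ)) • Finsupp.single (i + j) (1 : ℂ)
      + (if i = 1 then (t * ((j : ℕ) : ℂ)) • Finsupp.single j (1 : ℂ) else 0)
      - (if j = 1 then (t * ((i : ℕ) : ℂ)) • Finsupp.single i (1 : ℂ) else 0) := by
  unfold c12
  by_cases hi : i = 1 <;> by_cases hj : j = 1 <;>
    simp [hi, hj, add_comm] <;> abel

lemma c12_skew (t : ℂ) (i j : ℕ+) : c12 t i j = -c12 t j i := by
  rw [c12_eq, c12_eq, add_comm j i]
  split_ifs <;> module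

lemma br_comp (t : ℂ) (i j k : ℕ+) :
    L1br2 t (c12 t i j) (Finsupp.single k 1) =
      (((j : ℕ) : ℂ) - ((i : ℕ) : ℂ)) • c12 t (i + j) k
        + (if i = 1 then (t * ((j : ℕ) : ℂ)) • c12 t j k else 0)
        - (if j = 1 then (t * ((i : ℕ) : ℂ)) • c12 t i k else 0) := by
  rw [c12_eq]
  split_ifs with h1 h2 <;>
    simp only [map_add, map_sub, map_smul, map_zero, LinearMap.sub_apply, LinearMap.add_apply,
      LinearMap.smul_apply, LinearMap.zero_apply, br_ss, add_zero, sub_zero, zero_sub]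


lemma pn {a b : ℕ+} (h : (a : ℕ) = (b : ℕ)) : a = b := PNat.coe_injective h

set_option maxHeartbeats 1600000 in
lemma jac_basis (t : ℂ) (i j k : ℕ+) :
    L1br2 t (L1br2 t (Finsupp.single i 1) (Finsupp.single j 1)) (Finsupp.single k 1)
      + L1br2 t (L1br2 t (Finsupp.single j 1) (Finsupp.single k 1)) (Finsupp.single i 1)
      + L1br2 t (L1br2 t (Finsupp.single k 1) (Finsupp.single i 1)) (Finsupp.single j 1)
      = 0 := by
  rw [br_ss, br_ss, br_ss, br_comp, br_comp, br_comp]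
  rw [c12_eq t (i+j) k, c12_eq t (j+k) i, c12_eq t (k+i) j,
    c12_eq t i j, c12_eq t j k, c12_eq t k i, c12_eq t i k, c12_eq t j i, c12_eq t k j]
  by_cases hi : i = 1 <;> by_cases hj : j = 1 <;> by_cases hk : k = 1 <;>
    simp only [hi, hj, hk, if_true, if_false, pnat_add_ne_one, if_neg, if_pos,
      ite_true, ite_false, eq_self_iff_true, one_ne_zero] <;>
    push_cast
  · module
  · rw [show ((1:ℕ+)+k) = k+1 from add_comm 1 k]; module
  · rw [show ((1:ℕ+)+j) = j+1 from add_comm 1 j]; module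
  · rw [show ((1:ℕ+)+j+k) = j+k+1 from by apply pn; push_cast; omega,
      show ((k:ℕ+)+1+j) = j+k+1 from by apply pn; push_cast; omega,
      show ((k:ℕ+)+j) = j+k from add_comm k j]
    module
  · rw [show ((1:ℕ+)+i) = i+1 from add_comm 1 i]; module
  · rw [show ((1:ℕ+)+k+i) = i+1+k from by apply pn; push_cast; omega,
      show ((k:ℕ+)+i+1) = i+1+k from by apply pn; push_cast; omega,
      show ((k:ℕ+)+i) = i+k from add_comm k i]
    module
  · rw [show ((1:ℕ+)+i+j) = i+j+1 from by apply pn; push_cast; omega,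
      show ((j:ℕ+)+1+i) = i+j+1 from by apply pn; push_cast; omega,
      show ((j:ℕ+)+i) = i+j from add_comm j i]
    module
  · rw [show ((j:ℕ+)+k+i) = i+j+k from by apply pn; push_cast; omega,
      show ((k:ℕ+)+i+j) = i+j+k from by apply pn; push_cast; omega]
    module

lemma br_sb (t : ℂ) (i j : ℕ+) (a b : ℂ) :
    L1br2 t (Finsupp.single i a) (Finsupp.single j b) = (a * b) • c12 t i j := by
  rw [← Finsupp.smul_single_one i a, ← Finsupp.smul_single_one j b]
  simp only [map_smul, LinearMap.smul_apply, br_ss, smul_smul]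
  rw [mul_comm b a]

lemma skew (t : ℂ) (x y : ℕ+ →₀ ℂ) : L1br2 t x y = -L1br2 t y x := by
  induction x using Finsupp.induction_linear with
  | zero => simp
  | add f g hf hg => simp only [map_add, LinearMap.add_apply, hf, hg]; abel
  | single i a =>
    induction y using Finsupp.induction_linear with
    | zero => simp
    | add f g hf hg => simp only [map_add, LinearMap.add_apply, hf, hg]; abel
    | single j b =>
      rw [br_sb, br_sb, c12_skew, smul_neg, mul_comm]

lemma jac (t : ℂ) (x y z : ℕ+ →₀ ℂ) :
    L1br2 t (L1br2 t x y) z + L1br2 t (L1br2 t y z) x + L1br2 t (L1br2 t z x) y = 0 := by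
  induction x using Finsupp.induction_linear with
  | zero => simp
  | add f g hf hg =>
    simp only [map_add, LinearMap.add_apply]
    have h := congrArg₂ HAdd.hAdd hf hg
    rw [add_zero] at h
    rw [← h]
    abel
  | single i a =>
    induction y using Finsupp.induction_linear with
    | zero => simp
    | add f g hf hg =>
    simp only [map_add, LinearMap.add_apply]
    have h := congrArg₂ HAdd.hAdd hf hg
    rw [add_zero] at h
    rw [← h]
    abel
    | single j b =>
      induction z using Finsupp.induction_linear with
      | zero => simp
      | add f g hf hg =>
    simp only [map_add, LinearMap.add_apply]
    have h := congrArg₂ HAdd.hAdd hf hg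
    rw [add_zero] at h
    rw [← h]
    abel
      | single k c =>
        have H := jac_basis t i j k
        rw [show L1br2 t (L1br2 t (Finsupp.single i a) (Finsupp.single j b)) (Finsupp.single k c)
              + L1br2 t (L1br2 t (Finsupp.single j b) (Finsupp.single k c)) (Finsupp.single i a)
              + L1br2 t (L1br2 t (Finsupp.single k c) (Finsupp.single i a)) (Finsupp.single j b)
            = (a * (b * c)) •
                (L1br2 t (L1br2 t (Finsupp.single i 1) (Finsupp.single j 1)) (Finsupp.single k 1)
                + L1br2 t (L1br2 t (Finsupp.single j 1) (Finsupp.single k 1)) (Finsupp.single i 1)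
                + L1br2 t (L1br2 t (Finsupp.single k 1) (Finsupp.single i 1)) (Finsupp.single j 1))
            from by
          rw [← Finsupp.smul_single_one i a, ← Finsupp.smul_single_one j b,
            ← Finsupp.smul_single_one k c]
          simp only [map_smul, LinearMap.smul_apply, smul_smul]
          module,
          H, smul_zero]

/-- for each `t ∈ ℂ` the bracket `[·,·]²_t` (modifying the `L₁` bracket only
when one index equals `1`) is skew-symmetric and satisfies the Jacobi identity. -/
theorem stmt_12 (t : ℂ) :
    (∀ j : ℕ+, j ≠ 1 → L1br2 t (Finsupp.single 1 1) (Finsupp.single j 1) =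
      (((j : ℕ) : ℂ) - 1) • Finsupp.single (j + 1) (1 : ℂ)
        + (t * ((j : ℕ) : ℂ)) • Finsupp.single j (1 : ℂ)) ∧
    (∀ i j : ℕ+, i ≠ 1 → j ≠ 1 → L1br2 t (Finsupp.single i 1) (Finsupp.single j 1) =
      (((j : ℕ) : ℂ) - ((i : ℕ) : ℂ)) • Finsupp.single (i + j) (1 : ℂ)) ∧
    (∀ x y : ℕ+ →₀ ℂ, L1br2 t x y = -L1br2 t y x) ∧
    (∀ x y z : ℕ+ →₀ ℂ,
      L1br2 t (L1br2 t x y) z + L1br2 t (L1br2 t y z) x + L1br2 t (L1br2 t z x) y = 0) := by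
  refine ⟨fun j hj => ?_, fun i j hi hj => ?_, skew t, jac t⟩
  · rw [br_ss]; simp [c12, hj]
  · rw [br_ss]; simp [c12, hi, hj]
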